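/- Let Δ be a complex matrix on ℂ^{d_A} ⊗ ℂ^{d_B} and B a d_B×d_B complex matrix. Then ‖Tr_B[(I_{d_A} ⊗ B†) Δ]‖ ≤ √(d_A d_B) · ‖B‖ · ‖Δ‖. -/
import Mathlib

open Matrix Kronecker

/-- Frobenius norm of a complex matrix. -/
noncomputable def frob {m n : Type*} [Fintype m] [Fintype n] (M : Matrix m n ℂ) : ℝ :=
  Real.sqrt (∑ i, ∑ j, ‖M i j‖ ^ 2)

/-- Partial trace over the second tensor factor. -/
noncomputable def trB {dA dB : ℕ} (X : Matrix (Fin dA × Fin dB) (Fin dA × Fin dB) ℂ) :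
    Matrix (Fin dA) (Fin dA) ℂ :=
  Matrix.of fun i i' => ∑ j, X (i, j) (i', j)

lemma frob_nonneg {m n : Type*} [Fintype m] [Fintype n] (M : Matrix m n ℂ) : 0 ≤ frob M :=
  Real.sqrt_nonneg _

lemma entry_eq {dA dB : ℕ}
    (Δ : Matrix (Fin dA × Fin dB) (Fin dA × Fin dB) ℂ)
    (B : Matrix (Fin dB) (Fin dB) ℂ) (i i' : Fin dA) :
    trB (((1 : Matrix (Fin dA) (Fin dA) ℂ) ⊗ₖ Bᴴ) * Δ) i i' =
      ∑ p : Fin dB × Fin dB, (starRingEnd ℂ) (B p.2 p.1) * Δ (i, p.2) (i', p.1) := by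
  simp [trB, Matrix.mul_apply, Matrix.kroneckerMap_apply, Matrix.one_apply,
    Fintype.sum_prod_type, conjTranspose_apply, ite_mul, zero_mul]

theorem partialTrace_mul_norm_bound {dA dB : ℕ}
    (Δ : Matrix (Fin dA × Fin dB) (Fin dA × Fin dB) ℂ)
    (B : Matrix (Fin dB) (Fin dB) ℂ) :
    frob (trB (((1 : Matrix (Fin dA) (Fin dA) ℂ) ⊗ₖ Bᴴ) * Δ)) ≤
      Real.sqrt (dA * dB) * frob B * frob Δ := by
  have hB : (0:ℝ) ≤ ∑ i, ∑ j, ‖B i j‖ ^ 2 := by positivity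
  have key : frob (trB (((1 : Matrix (Fin dA) (Fin dA) ℂ) ⊗ₖ Bᴴ) * Δ)) ≤ frob B * frob Δ := by
    rw [frob, frob, frob, ← Real.sqrt_mul hB]
    apply Real.sqrt_le_sqrt
    have step : ∀ i i' : Fin dA,
        ‖trB (((1 : Matrix (Fin dA) (Fin dA) ℂ) ⊗ₖ Bᴴ) * Δ) i i'‖ ^ 2 ≤
        (∑ i, ∑ j, ‖B i j‖ ^ 2) * ∑ p : Fin dB × Fin dB, ‖Δ (i, p.2) (i', p.1)‖ ^ 2 := by
      intro i i'
      rw [entry_eq]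
      calc ‖∑ p : Fin dB × Fin dB, (starRingEnd ℂ) (B p.2 p.1) * Δ (i, p.2) (i', p.1)‖ ^ 2
          ≤ (∑ p : Fin dB × Fin dB, ‖B p.2 p.1‖ * ‖Δ (i, p.2) (i', p.1)‖) ^ 2 := by
            apply pow_le_pow_left₀ (norm_nonneg _)
            refine (norm_sum_le _ _).trans (le_of_eq ?_)
            simp [norm_mul]
        _ ≤ (∑ p : Fin dB × Fin dB, ‖B p.2 p.1‖ ^ 2) *
            ∑ p : Fin dB × Fin dB, ‖Δ (i, p.2) (i', p.1)‖ ^ 2 :=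
            Finset.sum_mul_sq_le_sq_mul_sq _ _ _
        _ = (∑ i, ∑ j, ‖B i j‖ ^ 2) * ∑ p : Fin dB × Fin dB, ‖Δ (i, p.2) (i', p.1)‖ ^ 2 := by
            congr 1
            rw [Fintype.sum_prod_type, Finset.sum_comm]
    calc ∑ i, ∑ i', ‖trB (((1 : Matrix (Fin dA) (Fin dA) ℂ) ⊗ₖ Bᴴ) * Δ) i i'‖ ^ 2
        ≤ ∑ i : Fin dA, ∑ i' : Fin dA,
            (∑ i, ∑ j, ‖B i j‖ ^ 2) * ∑ p : Fin dB × Fin dB, ‖Δ (i, p.2) (i', p.1)‖ ^ 2 := by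
          exact Finset.sum_le_sum fun i _ => Finset.sum_le_sum fun i' _ => step i i'
      _ = (∑ i, ∑ j, ‖B i j‖ ^ 2) * ∑ p, ∑ q, ‖Δ p q‖ ^ 2 := by
          simp_rw [← Finset.mul_sum]
          congr 1
          simp_rw [Fintype.sum_prod_type]
          refine Finset.sum_congr rfl fun i _ => ?_
          rw [show (∑ i' : Fin dA, ∑ j : Fin dB, ∑ b : Fin dB, ‖Δ (i, b) (i', j)‖ ^ 2)
              = ∑ i' : Fin dA, ∑ b : Fin dB, ∑ j : Fin dB, ‖Δ (i, b) (i', j)‖ ^ 2 from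
            Finset.sum_congr rfl fun i' _ => Finset.sum_comm]
          exact Finset.sum_comm
  rcases Nat.eq_zero_or_pos (dA * dB) with h | h
  · have hz : frob (trB (((1 : Matrix (Fin dA) (Fin dA) ℂ) ⊗ₖ Bᴴ) * Δ)) = 0 := by
      rcases Nat.mul_eq_zero.mp h with h0 | h0 <;> subst h0 <;> simp [frob, trB]
    rw [hz]
    exact mul_nonneg (mul_nonneg (Real.sqrt_nonneg _) (frob_nonneg _)) (frob_nonneg _)
  · refine key.trans ?_
    have h1 : (1:ℝ) ≤ Real.sqrt (dA * dB) := by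
      rw [show (1:ℝ) = Real.sqrt 1 by simp]
      apply Real.sqrt_le_sqrt
      exact_mod_cast Nat.one_le_cast.mpr h
    calc frob B * frob Δ = 1 * (frob B * frob Δ) := by ring
      _ ≤ Real.sqrt (dA * dB) * (frob B * frob Δ) :=
          mul_le_mul_of_nonneg_right h1 (mul_nonneg (frob_nonneg _) (frob_nonneg _))
      _ = Real.sqrt (dA * dB) * frob B * frob Δ := by ring
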